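/- The Hopf map is a Riemannian submersion on horizontal vectors: for every unit vector x ∈ ℝ⁴ and every pair of vectors u, v ∈ ℝ⁴ that are horizontal at x (i.e. ⟨u, x⟩ = ⟨v, x⟩ = 0 and ⟨u, X₁(x)⟩ = ⟨v, X₁(x)⟩ = 0), the derivative of ψ preserves inner products: ⟨Dψₓ(u), Dψₓ(v)⟩ = ⟨u, v⟩; in particular ‖Dψₓ(u)‖ = ‖u‖ for every horizontal vector u at x. -/

import Mathlib

noncomputable section

/-- The Hopf map `ψ : ℝ⁴ → ℝ³`. -/
def hopf (x : EuclideanSpace ℝ (Fin 4)) : EuclideanSpace ℝ (Fin 3) :=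
  (WithLp.equiv 2 (Fin 3 → ℝ)).symm
    ![x 0 * x 2 + x 1 * x 3, x 1 * x 2 - x 0 * x 3,
      ((x 0) ^ 2 + (x 1) ^ 2 - (x 2) ^ 2 - (x 3) ^ 2) / 2]

/-- The vector field `X₁(x) = (−x², x¹, −x⁴, x³)` on `ℝ⁴`. -/
def X1 (x : EuclideanSpace ℝ (Fin 4)) : EuclideanSpace ℝ (Fin 4) :=
  (WithLp.equiv 2 (Fin 4 → ℝ)).symm ![-x 1, x 0, -x 3, x 2]

abbrev Pj (i : Fin 4) : EuclideanSpace ℝ (Fin 4) →L[ℝ] ℝ := EuclideanSpace.proj i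

def DhopfPi (x : EuclideanSpace ℝ (Fin 4)) : Fin 3 → (EuclideanSpace ℝ (Fin 4) →L[ℝ] ℝ) :=
  ![x 0 • Pj 2 + x 2 • Pj 0 + (x 1 • Pj 3 + x 3 • Pj 1),
    x 1 • Pj 2 + x 2 • Pj 1 - (x 0 • Pj 3 + x 3 • Pj 0),
    (2:ℝ)⁻¹ • (x 0 • Pj 0 + x 0 • Pj 0 + (x 1 • Pj 1 + x 1 • Pj 1)
      - (x 2 • Pj 2 + x 2 • Pj 2) - (x 3 • Pj 3 + x 3 • Pj 3))]

def Dhopf (x : EuclideanSpace ℝ (Fin 4)) :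
    EuclideanSpace ℝ (Fin 4) →L[ℝ] EuclideanSpace ℝ (Fin 3) :=
  ((EuclideanSpace.equiv (Fin 3) ℝ).symm : (Fin 3 → ℝ) →L[ℝ] EuclideanSpace ℝ (Fin 3)).comp
    (ContinuousLinearMap.pi (DhopfPi x))

lemma pj_hasFDerivAt (x : EuclideanSpace ℝ (Fin 4)) (i : Fin 4) :
    HasFDerivAt (fun y : EuclideanSpace ℝ (Fin 4) => y i) (Pj i) x :=
  (Pj i).hasFDerivAt

lemma hopf_hasFDerivAt (x : EuclideanSpace ℝ (Fin 4)) :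
    HasFDerivAt hopf (Dhopf x) x := by
  have p := pj_hasFDerivAt x
  have key : HasFDerivAt
      (fun y : EuclideanSpace ℝ (Fin 4) =>
        (![y 0 * y 2 + y 1 * y 3, y 1 * y 2 - y 0 * y 3,
          ((y 0) ^ 2 + (y 1) ^ 2 - (y 2) ^ 2 - (y 3) ^ 2) / 2] : Fin 3 → ℝ))
      (ContinuousLinearMap.pi (DhopfPi x)) x := by
    apply hasFDerivAt_pi''
    intro i
    rw [ContinuousLinearMap.proj_pi]
    fin_cases i
    · simp [DhopfPi]; exact (((p 0).mul (p 2)).add ((p 1).mul (p 3)))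
    · simp [DhopfPi]; exact (((p 1).mul (p 2)).sub ((p 0).mul (p 3)))
    · have h := (((((p 0).mul (p 0)).add ((p 1).mul (p 1))).sub ((p 2).mul (p 2))).sub
        ((p 3).mul (p 3))).const_smul (2:ℝ)⁻¹
      show HasFDerivAt
        (fun y : EuclideanSpace ℝ (Fin 4) => ((y 0) ^ 2 + (y 1) ^ 2 - (y 2) ^ 2 - (y 3) ^ 2) / 2)
        ((2:ℝ)⁻¹ • (x 0 • Pj 0 + x 0 • Pj 0 + (x 1 • Pj 1 + x 1 • Pj 1)
          - (x 2 • Pj 2 + x 2 • Pj 2) - (x 3 • Pj 3 + x 3 • Pj 3))) x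
      have heq : (fun y : EuclideanSpace ℝ (Fin 4) =>
          ((y 0) ^ 2 + (y 1) ^ 2 - (y 2) ^ 2 - (y 3) ^ 2) / 2)
          = fun y : EuclideanSpace ℝ (Fin 4) =>
            (2:ℝ)⁻¹ • (y 0 * y 0 + y 1 * y 1 - y 2 * y 2 - y 3 * y 3) := by
        funext y; simp [smul_eq_mul]; ring
      rw [heq]
      exact h
  have := ((EuclideanSpace.equiv (Fin 3) ℝ).symm.hasFDerivAt).comp x key
  exact this

lemma fderiv_hopf_apply (x u : EuclideanSpace ℝ (Fin 4)) (i : Fin 3) :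
    (fderiv ℝ hopf x u) i = DhopfPi x i u := by
  rw [(hopf_hasFDerivAt x).fderiv]
  rfl

/-- The Hopf map is a Riemannian submersion: its derivative preserves inner products of
horizontal vectors; in particular it preserves norms of horizontal vectors. -/
theorem hopf_riemannian_submersion (x : EuclideanSpace ℝ (Fin 4)) (hx : ‖x‖ = 1) :
    (∀ u v : EuclideanSpace ℝ (Fin 4),
      (inner ℝ u x : ℝ) = 0 → (inner ℝ v x : ℝ) = 0 →
      (inner ℝ u (X1 x) : ℝ) = 0 → (inner ℝ v (X1 x) : ℝ) = 0 →
      (inner ℝ (fderiv ℝ hopf x u) (fderiv ℝ hopf x v) : ℝ) = (inner ℝ u v : ℝ)) ∧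
    ∀ u : EuclideanSpace ℝ (Fin 4),
      (inner ℝ u x : ℝ) = 0 → (inner ℝ u (X1 x) : ℝ) = 0 →
      ‖fderiv ℝ hopf x u‖ = ‖u‖ := by
  have hxs : x 0 ^ 2 + x 1 ^ 2 + x 2 ^ 2 + x 3 ^ 2 = 1 := by
    have h : (inner ℝ x x : ℝ) = 1 := by
      rw [real_inner_self_eq_norm_sq, hx]; norm_num
    rw [PiLp.inner_apply] at h
    simp [Fin.sum_univ_four] at h
    linarith [h]
  have main : ∀ u v : EuclideanSpace ℝ (Fin 4),
      (inner ℝ u x : ℝ) = 0 → (inner ℝ v x : ℝ) = 0 →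
      (inner ℝ u (X1 x) : ℝ) = 0 → (inner ℝ v (X1 x) : ℝ) = 0 →
      (inner ℝ (fderiv ℝ hopf x u) (fderiv ℝ hopf x v) : ℝ) = (inner ℝ u v : ℝ) := by
    intro u v hux hvx hu1 hv1
    rw [PiLp.inner_apply] at hu1 hv1 ⊢
    rw [PiLp.inner_apply]
    simp only [Fin.sum_univ_four, Fin.sum_univ_three, RCLike.inner_apply, conj_trivial,
      fderiv_hopf_apply, X1, WithLp.equiv_symm_apply, WithLp.ofLp_toLp, Matrix.cons_val_zero,
      Matrix.cons_val_one, Matrix.head_cons, Matrix.cons_val_two, Matrix.tail_cons,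
      Matrix.cons_val_three] at hu1 hv1 ⊢
    simp only [DhopfPi, Matrix.cons_val_zero, Matrix.cons_val_one, Matrix.head_cons,
      Matrix.cons_val_two, Matrix.tail_cons, ContinuousLinearMap.add_apply,
      ContinuousLinearMap.sub_apply, ContinuousLinearMap.smul_apply,
      PiLp.proj_apply, smul_eq_mul]
    linear_combination (u 0 * v 0 + u 1 * v 1 + u 2 * v 2 + u 3 * v 3) * hxs
      - (v 0 * (-x 1) + v 1 * x 0 + v 2 * (-x 3) + v 3 * x 2) * hu1
  refine ⟨main, fun u hux hu1 => ?_⟩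
  have h := main u u hux hux hu1 hu1
  have h1 : ‖fderiv ℝ hopf x u‖ ^ 2 = ‖u‖ ^ 2 := by
    rw [← real_inner_self_eq_norm_sq, ← real_inner_self_eq_norm_sq, h]
  exact (sq_eq_sq₀ (norm_nonneg _) (norm_nonneg _)).mp h1
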